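/- Let q be a positive integer and P a symmetric matrix with 0 ⪯ P ⪯ I (e.g. P = A^T A / ‖A‖_F²). If T is a multiset of q indices sampled i.i.d. and M = I − (1/2) Σ_{i∈T} |ã_i⟩⟨ã_i| where each unit vector ã_i is a row of A normalized, sampled with probability ‖A_{i*}‖²/‖A‖_F², then E[M²] = I − (3q/4)·A^T A/‖A‖_F² + ((q² − q)/4)·(A^T A/‖A‖_F²)², and if q = ‖A‖_F²/‖A‖² then restricted to the row space of A, E[M²] ⪯ (1 − 1/(2κ²)) I, where κ = ‖A‖‖A⁻¹‖. -/

import Mathlib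

lemma sum_fin_succ_split {ι R : Type*} [Fintype ι] [AddCommMonoid R] {q : ℕ}
    (g : (Fin (q+1) → ι) → R) :
    ∑ t : Fin (q+1) → ι, g t = ∑ x : ι, ∑ t : Fin q → ι, g (Fin.cons x t) := by
  rw [← Equiv.sum_comp (Fin.consEquiv fun _ : Fin (q+1) => ι) g, Fintype.sum_prod_type]
  rfl

section moments
variable {ι : Type*} [Fintype ι] {R : Type*} [Ring R] [Algebra ℝ R]
variable (w : ι → ℝ) (f : ι → R)

lemma mom0 (hw : ∑ i, w i = 1) : ∀ q : ℕ, ∑ t : Fin q → ι, ∏ s, w (t s) = 1 := by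
  intro q
  induction q with
  | zero => simp
  | succ q ih =>
    rw [sum_fin_succ_split (fun t => ∏ s, w (t s))]
    have : ∀ (x : ι) (t : Fin q → ι), ∏ s, w ((Fin.cons x t : Fin (q+1) → ι) s) = w x * ∏ s, w (t s) := by
      intro x t
      rw [Fin.prod_univ_succ]
      simp
    simp_rw [this, ← Finset.mul_sum, ih, mul_one, hw]

lemma mom1 (hw : ∑ i, w i = 1) : ∀ q : ℕ,
    ∑ t : Fin q → ι, (∏ s, w (t s)) • (∑ s, f (t s)) = (q : ℝ) • ∑ i, w i • f i := by
  intro q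
  induction q with
  | zero => simp
  | succ q ih =>
    rw [sum_fin_succ_split (fun t => (∏ s, w (t s)) • (∑ s, f (t s)))]
    have key : ∀ (x : ι) (t : Fin q → ι),
        (∏ s, w ((Fin.cons x t : Fin (q+1) → ι) s)) • (∑ s, f ((Fin.cons x t : Fin (q+1) → ι) s))
          = w x • ((∏ s, w (t s)) • f x) + w x • ((∏ s, w (t s)) • ∑ s, f (t s)) := by
      intro x t
      rw [Fin.prod_univ_succ, Fin.sum_univ_succ]
      simp [Fin.cons_zero, Fin.cons_succ, mul_smul, smul_add]
    simp_rw [key, Finset.sum_add_distrib, ← Finset.smul_sum,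
      ← Finset.sum_smul (f := fun t : Fin q → ι => ∏ s, w (t s)), mom0 w hw q, ih]
    have h1 : ∑ x : ι, w x • (1:ℝ) • f x = ∑ x : ι, w x • f x := by simp
    have h2 : ∑ x : ι, w x • (q:ℝ) • (∑ i, w i • f i) = (q:ℝ) • ∑ i, w i • f i := by
      simp_rw [smul_smul]
      rw [← Finset.sum_smul, ← Finset.sum_mul, hw, one_mul]
    rw [h1, h2]
    push_cast
    module

lemma mom2 (hw : ∑ i, w i = 1) : ∀ q : ℕ,
    ∑ t : Fin q → ι, (∏ s, w (t s)) • ((∑ s, f (t s)) * (∑ s, f (t s)))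
      = (q : ℝ) • (∑ i, w i • (f i * f i))
        + ((q : ℝ) ^ 2 - q) • ((∑ i, w i • f i) * (∑ i, w i • f i)) := by
  intro q
  induction q with
  | zero => simp
  | succ q ih =>
    set B := ∑ i, w i • f i with hB
    set C := ∑ i, w i • (f i * f i) with hC
    have sumL : ∀ X : R, ∑ x, w x • (f x * X) = B * X := by
      intro X
      rw [hB, Finset.sum_mul]
      simp [smul_mul_assoc]
    have sumR : ∀ X : R, ∑ x, w x • (X * f x) = X * B := by
      intro X
      rw [hB, Finset.mul_sum]
      simp [mul_smul_comm]
    rw [sum_fin_succ_split (fun t => (∏ s, w (t s)) • ((∑ s, f (t s)) * (∑ s, f (t s))))]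
    have key : ∀ (x : ι) (t : Fin q → ι),
        (∏ s, w ((Fin.cons x t : Fin (q+1) → ι) s)) •
            ((∑ s, f ((Fin.cons x t : Fin (q+1) → ι) s)) *
              (∑ s, f ((Fin.cons x t : Fin (q+1) → ι) s)))
          = w x • ((∏ s, w (t s)) • (f x * f x))
            + (w x • (f x * ((∏ s, w (t s)) • (∑ s, f (t s))))
            + (w x • (((∏ s, w (t s)) • (∑ s, f (t s))) * f x)
            + w x • ((∏ s, w (t s)) • ((∑ s, f (t s)) * (∑ s, f (t s)))))) := by
      intro x t
      rw [Fin.prod_univ_succ, Fin.sum_univ_succ]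
      simp only [Fin.cons_zero, Fin.cons_succ, add_mul, mul_add, mul_smul, smul_add,
        mul_smul_comm, smul_mul_assoc]
      abel
    simp_rw [key, Finset.sum_add_distrib]
    have e1 : ∑ x : ι, ∑ t : Fin q → ι, w x • ((∏ s, w (t s)) • (f x * f x)) = C := by
      have h : ∀ x : ι, ∑ t : Fin q → ι, w x • ((∏ s, w (t s)) • (f x * f x))
          = w x • (f x * f x) := by
        intro x
        rw [← Finset.smul_sum, ← Finset.sum_smul, mom0 w hw q, one_smul]
      simp_rw [h]
      rfl
    have e2 : ∑ x : ι, ∑ t : Fin q → ι, w x • (f x * ((∏ s, w (t s)) • (∑ s, f (t s))))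
        = (q : ℝ) • (B * B) := by
      have h : ∀ x : ι, ∑ t : Fin q → ι, w x • (f x * ((∏ s, w (t s)) • (∑ s, f (t s))))
          = w x • (f x * ((q : ℝ) • B)) := by
        intro x
        rw [← Finset.smul_sum, ← Finset.mul_sum, mom1 w f hw q]
      simp_rw [h, sumL ((q : ℝ) • B), mul_smul_comm]
    have e3 : ∑ x : ι, ∑ t : Fin q → ι, w x • (((∏ s, w (t s)) • (∑ s, f (t s))) * f x)
        = (q : ℝ) • (B * B) := by
      have h : ∀ x : ι, ∑ t : Fin q → ι, w x • (((∏ s, w (t s)) • (∑ s, f (t s))) * f x)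
          = w x • (((q : ℝ) • B) * f x) := by
        intro x
        rw [← Finset.smul_sum, ← Finset.sum_mul, mom1 w f hw q]
      simp_rw [h, sumR ((q : ℝ) • B), smul_mul_assoc]
    have e4 : ∑ x : ι, ∑ t : Fin q → ι,
          w x • ((∏ s, w (t s)) • ((∑ s, f (t s)) * (∑ s, f (t s))))
        = (q : ℝ) • C + ((q : ℝ) ^ 2 - q) • (B * B) := by
      have h : ∀ x : ι, ∑ t : Fin q → ι,
            w x • ((∏ s, w (t s)) • ((∑ s, f (t s)) * (∑ s, f (t s))))
          = w x • ((q : ℝ) • C + ((q : ℝ) ^ 2 - q) • (B * B)) := by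
        intro x
        rw [← Finset.smul_sum, ih]
      simp_rw [h]
      rw [← Finset.sum_smul, hw, one_smul]
    rw [e1, e2, e3, e4]
    push_cast
    module

end moments




open scoped Matrix
set_option maxHeartbeats 1000000 in
/-- Let `q > 0` and sample a multiset `t : Fin q → Fin m` of row indices
i.i.d. with `Pr[i] = ‖A_{i*}‖²/‖A‖_F²`, and let
`M t = I − (1/2) ∑_{s<q} |ã_{t s}⟩⟨ã_{t s}|` where `ã_i = A_{i*}/‖A_{i*}‖`.  Then with
`P = Aᵀ A/‖A‖_F²` (so that `0 ⪯ P ⪯ I`),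
`E[M²] = I − (3q/4) P + ((q² − q)/4) P²`, and if `q = ‖A‖_F²/‖A‖²` then, restricted to
the row space of `A`, `E[M²] ⪯ (1 − 1/(2κ²)) I` where `κ = ‖A‖ ‖A⁻¹‖`.
Here `snorm` is the spectral norm `‖A‖` (Rayleigh characterization) and `cinv`
stands for `‖A⁻¹‖` (characterized on the row space). -/
theorem stmt12 (m n q : ℕ) (hq0 : 0 < q)
    (A : Matrix (Fin m) (Fin n) ℝ) (hA : A ≠ 0)
    (hrow : ∀ i, (∑ j, A i j ^ 2) ≠ 0)
    (snorm : ℝ) (hsn0 : 0 < snorm)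
    (hsn1 : ∀ v : Fin n → ℝ, (∑ i, (A.mulVec v i) ^ 2) ≤ snorm ^ 2 * ∑ j, v j ^ 2)
    (hsn2 : ∃ v : Fin n → ℝ, v ≠ 0 ∧
      (∑ i, (A.mulVec v i) ^ 2) = snorm ^ 2 * ∑ j, v j ^ 2)
    (cinv : ℝ) (hcinv0 : 0 < cinv)
    (hcinv : ∀ w : Fin n → ℝ, (∃ y : Fin m → ℝ, w = Matrix.vecMul y A) →
      (∑ j, w j ^ 2) ≤ cinv ^ 2 * ∑ i, (A.mulVec w i) ^ 2)
    (atil : Fin m → Fin n → ℝ)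
    (hatil : ∀ i j, atil i j = A i j / Real.sqrt (∑ l, A i l ^ 2))
    (M : (Fin q → Fin m) → Matrix (Fin n) (Fin n) ℝ)
    (hM : ∀ t, M t = (1 : Matrix (Fin n) (Fin n) ℝ) -
      (1 / 2 : ℝ) • ∑ s, Matrix.vecMulVec (atil (t s)) (atil (t s)))
    (P : Matrix (Fin n) (Fin n) ℝ)
    (hP : P = ((∑ i, ∑ j, A i j ^ 2)⁻¹) • (A.transpose * A)) :
    (∑ t : Fin q → Fin m,
        (∏ s, (∑ j, A (t s) j ^ 2) / (∑ i, ∑ j, A i j ^ 2)) • (M t * M t)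
      = (1 : Matrix (Fin n) (Fin n) ℝ) - ((3 * q : ℝ) / 4) • P
          + (((q : ℝ) ^ 2 - q) / 4) • (P * P)) ∧
    ((q : ℝ) = (∑ i, ∑ j, A i j ^ 2) / snorm ^ 2 →
      ∀ v : Fin n → ℝ, (∃ y : Fin m → ℝ, v = Matrix.vecMul y A) →
        v ⬝ᵥ (∑ t : Fin q → Fin m,
            (∏ s, (∑ j, A (t s) j ^ 2) / (∑ i, ∑ j, A i j ^ 2)) • (M t * M t)).mulVec v
          ≤ (1 - 1 / (2 * (snorm * cinv) ^ 2)) * ∑ j, v j ^ 2) := by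
  classical
  set F : ℝ := ∑ i, ∑ j, A i j ^ 2 with hF
  set r : Fin m → ℝ := fun i => ∑ j, A i j ^ 2 with hr
  set w : Fin m → ℝ := fun i => (∑ j, A i j ^ 2) / (∑ i, ∑ j, A i j ^ 2) with hwdef
  have hFnonneg : (0:ℝ) ≤ F := by positivity
  have hFne : F ≠ 0 := by
    intro h
    apply hA
    ext i j
    have h1 := (Finset.sum_eq_zero_iff_of_nonneg
      (fun i _ => by positivity : ∀ i ∈ Finset.univ, (0:ℝ) ≤ ∑ j, A i j ^ 2)).1 h i
      (Finset.mem_univ i)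
    have h2 := (Finset.sum_eq_zero_iff_of_nonneg
      (fun j _ => by positivity : ∀ j ∈ Finset.univ, (0:ℝ) ≤ A i j ^ 2)).1 h1 j
      (Finset.mem_univ j)
    have := pow_eq_zero_iff (n := 2) (by norm_num) |>.1 h2
    simpa using this
  have hFpos : (0:ℝ) < F := lt_of_le_of_ne hFnonneg (Ne.symm hFne)
  have hrpos : ∀ i, (0:ℝ) < r i := fun i =>
    lt_of_le_of_ne (by positivity) (Ne.symm (hrow i))
  have hwsum : ∑ i, w i = 1 := by
    rw [hwdef]
    rw [← Finset.sum_div]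
    exact div_self hFne
  set Q : Fin m → Matrix (Fin n) (Fin n) ℝ :=
    fun i => Matrix.vecMulVec (atil i) (atil i) with hQdef
  have hnorm : ∀ i, ∑ j, atil i j ^ 2 = 1 := by
    intro i
    have hs : Real.sqrt (r i) ^ 2 = r i := Real.sq_sqrt (hrpos i).le
    simp_rw [hatil, div_pow]
    rw [← Finset.sum_div, hs]
    exact div_self (hrow i)
  have hQidem : ∀ i, Q i * Q i = Q i := by
    intro i
    ext j k
    simp only [hQdef, Matrix.mul_apply, Matrix.vecMulVec_apply]
    have h : ∀ l, (atil i j * atil i l) * (atil i l * atil i k)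
        = (atil i j * atil i k) * atil i l ^ 2 := fun l => by ring
    simp_rw [h, ← Finset.mul_sum, hnorm i, mul_one]
  have hB : ∑ i, w i • Q i = P := by
    rw [hP]
    ext j k
    simp only [hQdef, Matrix.sum_apply, Matrix.smul_apply, Matrix.vecMulVec_apply,
      smul_eq_mul, Matrix.mul_apply, Matrix.transpose_apply]
    rw [Finset.mul_sum]
    refine Finset.sum_congr rfl (fun i _ => ?_)
    have hs : Real.sqrt (r i) * Real.sqrt (r i) = r i := Real.mul_self_sqrt (hrpos i).le
    have hsne : Real.sqrt (r i) ≠ 0 := by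
      have := Real.sqrt_pos.2 (hrpos i)
      exact ne_of_gt this
    have h1 : atil i j * atil i k = (A i j * A i k) / r i := by
      rw [hatil, hatil, div_mul_div_comm, hs]
    show r i / F * (atil i j * atil i k) = F⁻¹ * (A i j * A i k)
    rw [h1, div_mul_div_comm, mul_comm F (r i), mul_div_mul_left _ _ (hrow i),
      div_eq_inv_mul]
  set S : (Fin q → Fin m) → Matrix (Fin n) (Fin n) ℝ := fun t => ∑ s, Q (t s) with hSdef
  have expand : ∀ t, M t * M t
      = 1 - S t + (1/4 : ℝ) • (S t * S t) := by
    intro t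
    rw [hM t]
    have hSQ : ∑ s, Matrix.vecMulVec (atil (t s)) (atil (t s)) = S t := rfl
    rw [hSQ]
    simp only [sub_mul, mul_sub, mul_one, one_mul, smul_mul_assoc, mul_smul_comm,
      smul_smul]
    module
  have hmain : ∑ t : Fin q → Fin m,
      (∏ s, (∑ j, A (t s) j ^ 2) / (∑ i, ∑ j, A i j ^ 2)) • (M t * M t)
      = (1 : Matrix (Fin n) (Fin n) ℝ) - ((3 * q : ℝ) / 4) • P
        + (((q : ℝ) ^ 2 - q) / 4) • (P * P) := by
    have hw' : ∀ t : Fin q → Fin m,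
        (∏ s, (∑ j, A (t s) j ^ 2) / (∑ i, ∑ j, A i j ^ 2)) = ∏ s, w (t s) := by
      intro t; rfl
    calc ∑ t : Fin q → Fin m,
        (∏ s, (∑ j, A (t s) j ^ 2) / (∑ i, ∑ j, A i j ^ 2)) • (M t * M t)
        = ∑ t : Fin q → Fin m, ((∏ s, w (t s)) • (1 : Matrix (Fin n) (Fin n) ℝ)
            - (∏ s, w (t s)) • S t
            + (1/4 : ℝ) • ((∏ s, w (t s)) • (S t * S t))) := by
          refine Finset.sum_congr rfl (fun t _ => ?_)
          rw [hw' t, expand t, smul_add, smul_sub, smul_comm]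
      _ = (∑ t : Fin q → Fin m, ∏ s, w (t s)) • (1 : Matrix (Fin n) (Fin n) ℝ)
            - ∑ t : Fin q → Fin m, (∏ s, w (t s)) • S t
            + (1/4 : ℝ) • ∑ t : Fin q → Fin m, (∏ s, w (t s)) • (S t * S t) := by
          rw [Finset.sum_add_distrib, Finset.sum_sub_distrib, ← Finset.sum_smul,
            ← Finset.smul_sum]
      _ = (1 : Matrix (Fin n) (Fin n) ℝ) - (q : ℝ) • P
            + (1/4 : ℝ) • ((q : ℝ) • P + ((q : ℝ) ^ 2 - q) • (P * P)) := by
          rw [mom0 w hwsum q, one_smul, mom1 w Q hwsum q, mom2 w Q hwsum q]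
          simp_rw [hQidem]
          rw [hB]
      _ = (1 : Matrix (Fin n) (Fin n) ℝ) - ((3 * q : ℝ) / 4) • P
            + (((q : ℝ) ^ 2 - q) / 4) • (P * P) := by module
  refine ⟨hmain, ?_⟩
  intro hqF v hv
  have hqF' : (q:ℝ) = F / snorm ^ 2 := hqF
  rw [hmain]
  have hq1 : (1:ℝ) ≤ (q:ℝ) := by exact_mod_cast hq0
  have hqpos : (0:ℝ) < (q:ℝ) := by exact_mod_cast hq0
  have hFq : F = (q:ℝ) * snorm ^ 2 := by
    rw [eq_div_iff (by positivity : snorm ^ 2 ≠ 0)] at hqF'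
    exact hqF'.symm
  set wv : Fin m → ℝ := A.mulVec v with hwv
  set u : Fin n → ℝ := A.transpose.mulVec wv with hu
  set W : ℝ := ∑ i, wv i ^ 2 with hW
  set U : ℝ := ∑ j, u j ^ 2 with hU
  set nv : ℝ := ∑ j, v j ^ 2 with hnv
  have hdotsq : ∀ (x : Fin n → ℝ), x ⬝ᵥ x = ∑ j, x j ^ 2 := by
    intro x
    simp [dotProduct, pow_two]
  have hdotsq' : ∀ (x : Fin m → ℝ), x ⬝ᵥ x = ∑ i, x i ^ 2 := by
    intro x
    simp [dotProduct, pow_two]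
  have hvPv : v ⬝ᵥ (P.mulVec v) = W / F := by
    rw [hP, Matrix.smul_mulVec, dotProduct_smul, smul_eq_mul,
      ← Matrix.mulVec_mulVec, Matrix.dotProduct_mulVec, Matrix.vecMul_transpose]
    rw [show A *ᵥ v = wv from rfl, hdotsq' wv, ← hW]
    rw [div_eq_inv_mul]
  have hUAu : U = wv ⬝ᵥ (A.mulVec u) := by
    rw [hU, ← hdotsq u, hu, Matrix.mulVec_transpose, ← Matrix.dotProduct_mulVec,
      ← Matrix.mulVec_transpose, ← hu]
  have hvP2v : v ⬝ᵥ ((P * P).mulVec v) = U / F ^ 2 := by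
    rw [hP, Matrix.smul_mul, Matrix.mul_smul, smul_smul, Matrix.smul_mulVec,
      dotProduct_smul, smul_eq_mul]
    simp only [← Matrix.mulVec_mulVec]
    rw [Matrix.dotProduct_mulVec, Matrix.vecMul_transpose]
    rw [show A *ᵥ v = wv from rfl, show Aᵀ *ᵥ wv = u from rfl, ← hUAu, pow_two]
    field_simp
  have hW0 : (0:ℝ) ≤ W := by positivity
  have hU0 : (0:ℝ) ≤ U := by positivity
  have hnv0 : (0:ℝ) ≤ nv := by positivity
  have hud : U ≤ snorm ^ 2 * W := by
    rcases eq_or_lt_of_le hU0 with hU0' | hUpos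
    · rw [← hU0']
      positivity
    · have hcs : (wv ⬝ᵥ (A.mulVec u)) ^ 2 ≤ W * ∑ i, (A.mulVec u) i ^ 2 := by
        have h := Finset.sum_mul_sq_le_sq_mul_sq Finset.univ wv (A.mulVec u)
        simpa [dotProduct, hW] using h
      have h2 : ∑ i, (A.mulVec u) i ^ 2 ≤ snorm ^ 2 * U := hsn1 u
      have h3 : U ^ 2 ≤ W * (snorm ^ 2 * U) := by
        calc U ^ 2 = (wv ⬝ᵥ (A.mulVec u)) ^ 2 := by rw [hUAu]
          _ ≤ W * ∑ i, (A.mulVec u) i ^ 2 := hcs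
          _ ≤ W * (snorm ^ 2 * U) := mul_le_mul_of_nonneg_left h2 hW0
      have h4 : U * U ≤ (snorm ^ 2 * W) * U := by
        calc U * U = U ^ 2 := (pow_two U).symm
          _ ≤ W * (snorm ^ 2 * U) := h3
          _ = (snorm ^ 2 * W) * U := by ring
      exact le_of_mul_le_mul_right h4 hUpos
  have hlow : nv ≤ cinv ^ 2 * W := hcinv v hv
  have hexp : v ⬝ᵥ (((1 : Matrix (Fin n) (Fin n) ℝ) - ((3 * q : ℝ) / 4) • P
      + (((q : ℝ) ^ 2 - q) / 4) • (P * P)).mulVec v)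
      = nv - ((3 * q : ℝ) / 4) * (W / F) + (((q : ℝ) ^ 2 - q) / 4) * (U / F ^ 2) := by
    rw [Matrix.add_mulVec, Matrix.sub_mulVec, Matrix.smul_mulVec,
      Matrix.smul_mulVec, Matrix.one_mulVec, dotProduct_add,
      dotProduct_sub, dotProduct_smul, dotProduct_smul,
      smul_eq_mul, smul_eq_mul, hvPv, hvP2v, hdotsq v, ← hnv]
  rw [hexp]
  have hc1 : (0:ℝ) ≤ ((q:ℝ) ^ 2 - q) / 4 := by
    apply div_nonneg _ (by norm_num : (0:ℝ) ≤ 4)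
    have h := mul_nonneg hqpos.le (by linarith : (0:ℝ) ≤ (q:ℝ) - 1)
    nlinarith [h]
  have e1 : (((q:ℝ) ^ 2 - q) / 4) * (U / F ^ 2)
      ≤ (((q:ℝ) ^ 2 - q) / 4) * ((snorm ^ 2 * W) / F ^ 2) := by
    apply mul_le_mul_of_nonneg_left _ hc1
    gcongr
  have e2 : (((q:ℝ) ^ 2 - q) / 4) * ((snorm ^ 2 * W) / F ^ 2)
      = (((q:ℝ) - 1) / 4) * (W / F) := by
    rw [hFq]
    field_simp
  have e4 : nv / (2 * (snorm * cinv) ^ 2) ≤ ((q:ℝ) / 2) * (W / F) := by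
    have h5 : nv / cinv ^ 2 ≤ W := by
      rw [div_le_iff₀ (by positivity : (0:ℝ) < cinv ^ 2)]
      linarith [hlow]
    calc nv / (2 * (snorm * cinv) ^ 2) = ((q:ℝ) / 2) * ((nv / cinv ^ 2) / F) := by
          rw [hFq]
          field_simp
      _ ≤ ((q:ℝ) / 2) * (W / F) := by gcongr
  have hWF0 : (0:ℝ) ≤ W / F := by positivity
  calc nv - ((3 * q : ℝ) / 4) * (W / F) + (((q : ℝ) ^ 2 - q) / 4) * (U / F ^ 2)
      ≤ nv - ((3 * q : ℝ) / 4) * (W / F) + (((q:ℝ) - 1) / 4) * (W / F) := by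
        have := le_of_le_of_eq e1 e2
        linarith [this]
    _ = nv - ((q:ℝ) / 2) * (W / F) - (1 / 4) * (W / F) := by ring
    _ ≤ nv - ((q:ℝ) / 2) * (W / F) := by linarith [hWF0]
    _ ≤ nv - nv / (2 * (snorm * cinv) ^ 2) := by linarith [e4]
    _ = (1 - 1 / (2 * (snorm * cinv) ^ 2)) * nv := by ring
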